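/- Let K be a field with a degree-lexicographic monomial order on K[X,Y] (entries of two n×n matrices of indeterminates X, Y) satisfying X_{11} > X_{21} > ... > X_{n1} > X_{12} > ... > X_{nn} > Y_{11} > ... > Y_{nn}. Then for each 0 ≤ k ≤ n, the leading monomial of f_{k,n-k} = Σ_{S⊆[n],|S|=k} det(Z^S) is X_{11}X_{22}⋯X_{kk}·Y_{k+1,k+1}⋯Y_{nn}. -/

import Mathlib

open MvPolynomial

/-- Significance key of the variable T_{ijk}: the variables are ordered
X_{11} > X_{21} > ... > X_{n1} > X_{12} > ... > X_{nn} > Y_{11} > ... > Y_{nn}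
(X = (T_{ij0}), Y = (T_{ij1})), smaller key = more significant (larger) variable. -/
def varKey (n : ℕ) (v : Fin n × Fin n × Fin 2) : ℕ :=
  (v.2.2 : ℕ) * (n * n) + (v.2.1 : ℕ) * n + (v.1 : ℕ)

/-- Degree-lexicographic strict order on monomials (exponent vectors): first compare
total degrees; for equal total degrees compare lexicographically, the most significant
(smallest key) variable where the exponents differ deciding. -/
def monLT (n : ℕ) (a b : (Fin n × Fin n × Fin 2) →₀ ℕ) : Prop :=
  (a.sum fun _ e => e) < (b.sum fun _ e => e) ∨
    ((a.sum fun _ e => e) = (b.sum fun _ e => e) ∧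
      ∃ v, (∀ w, varKey n w < varKey n v → a w = b w) ∧ a v < b v)

/-- `μ` is the leading monomial of `f` w.r.t. the degree-lexicographic order. -/
def IsLeadMon {K : Type*} [CommSemiring K] (n : ℕ)
    (f : MvPolynomial (Fin n × Fin n × Fin 2) K) (μ : (Fin n × Fin n × Fin 2) →₀ ℕ) : Prop :=
  μ ∈ f.support ∧ ∀ ν ∈ f.support, ν ≠ μ → monLT n ν μ

/-- for 0 ≤ k ≤ n, the leading monomial of
f_{k,n-k} = Σ_{S⊆[n],|S|=k} det(Z^S) is X_{11}⋯X_{kk}·Y_{k+1,k+1}⋯Y_{nn}. -/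
private lemma digit_lt {m a a' b b' : ℕ} (ha : a < m) (ha' : a' < m)
    (h : b * m + a < b' * m + a') : b < b' ∨ (b = b' ∧ a < a') := by
  rcases lt_trichotomy b b' with h1 | h1 | h1
  · exact Or.inl h1
  · subst h1; exact Or.inr ⟨rfl, by omega⟩
  · exfalso
    have : b' * m + a' < b * m + a := by
      calc b' * m + a' < b' * m + m := by omega
        _ = (b' + 1) * m := by ring
        _ ≤ b * m := Nat.mul_le_mul_right m h1
        _ ≤ b * m + a := Nat.le_add_right _ _
    omega

private lemma subkey_lt {n : ℕ} (a b : Fin n) : (b : ℕ) * n + (a : ℕ) < n * n := by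
  calc (b : ℕ) * n + (a : ℕ) < (b : ℕ) * n + n := by omega
    _ = ((b : ℕ) + 1) * n := by ring
    _ ≤ n * n := Nat.mul_le_mul_right n b.2

private def chiF {n : ℕ} (S : Finset (Fin n)) (j : Fin n) : Fin 2 := if j ∈ S then 0 else 1

private noncomputable def emon {n : ℕ} (S : Finset (Fin n)) (σ : Equiv.Perm (Fin n)) :
    (Fin n × Fin n × Fin 2) →₀ ℕ :=
  ∑ i, Finsupp.single (σ i, i, chiF S i) 1

private lemma emon_apply {n : ℕ} (S : Finset (Fin n)) (σ : Equiv.Perm (Fin n))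
    (a b : Fin n) (c : Fin 2) :
    emon S σ (a, b, c) = if a = σ b ∧ c = chiF S b then 1 else 0 := by
  rw [emon, Finsupp.finset_sum_apply]
  rw [Finset.sum_eq_single b]
  · rw [Finsupp.single_apply]
    congr 1
    simp [Prod.ext_iff, eq_comm, and_comm]
  · intro i _ hi
    rw [Finsupp.single_apply, if_neg]
    simp only [Prod.ext_iff]
    rintro ⟨-, h2, -⟩; exact hi h2
  · intro h; exact absurd (Finset.mem_univ b) h

private lemma prod_X_eq {K : Type*} [CommSemiring K] {τ ι : Type*} (s : Finset ι)
    (v : ι → τ) :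
    (∏ i ∈ s, (X (v i) : MvPolynomial τ K)) =
      monomial (∑ i ∈ s, Finsupp.single (v i) 1) 1 := by
  classical
  induction s using Finset.induction with
  | empty => simp
  | insert a s h ih =>
    rw [Finset.prod_insert h, Finset.sum_insert h, ih, X, monomial_mul, one_mul]

private lemma sum_single_sum {τ : Type*} {n : ℕ} (v : Fin n → τ) :
    ((∑ i : Fin n, Finsupp.single (v i) 1).sum fun _ x => x) = n := by
  classical
  have : ∀ s : Finset (Fin n),
      ((∑ i ∈ s, Finsupp.single (v i) 1).sum fun _ x => x) = s.card := by
    intro s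
    induction s using Finset.induction with
    | empty => simp
    | insert a s h ih =>
      rw [Finset.sum_insert h, Finsupp.sum_add_index' (fun _ => rfl) (fun _ _ _ => rfl),
        ih, Finsupp.sum_single_index rfl, Finset.card_insert_of_notMem h]
      omega
  simpa using this Finset.univ

private lemma coeff_F {K : Type*} [Field K] {n k : ℕ}
    (ν : (Fin n × Fin n × Fin 2) →₀ ℕ) :
    coeff ν
      (∑ S ∈ Finset.powersetCard k (Finset.univ : Finset (Fin n)),
        (Matrix.of fun i j =>
            if j ∈ S then
              (MvPolynomial.X (i, j, (0 : Fin 2)) :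
                MvPolynomial (Fin n × Fin n × Fin 2) K)
            else MvPolynomial.X (i, j, (1 : Fin 2))).det) =
      ∑ S ∈ Finset.powersetCard k (Finset.univ : Finset (Fin n)),
        ∑ σ : Equiv.Perm (Fin n),
          ((Equiv.Perm.sign σ : ℤ) : K) * (if emon S σ = ν then 1 else 0) := by
  rw [coeff_sum]
  refine Finset.sum_congr rfl fun S _ => ?_
  rw [Matrix.det_apply', coeff_sum]
  refine Finset.sum_congr rfl fun σ _ => ?_
  have hprod : (∏ i, (Matrix.of fun i j =>
      if j ∈ S then (MvPolynomial.X (i, j, (0 : Fin 2)) : MvPolynomial (Fin n × Fin n × Fin 2) K)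
      else MvPolynomial.X (i, j, (1 : Fin 2))) (σ i) i) =
      monomial (emon S σ) (1 : K) := by
    rw [emon, ← prod_X_eq]
    refine Finset.prod_congr rfl fun i _ => ?_
    rw [Matrix.of_apply, chiF]
    split_ifs with h <;> rfl
  rw [hprod]
  have hcast : (((Equiv.Perm.sign σ : ℤ) : MvPolynomial (Fin n × Fin n × Fin 2) K)) =
      C (((Equiv.Perm.sign σ : ℤ) : K)) := by
    push_cast
    rfl
  rw [hcast, coeff_C_mul, coeff_monomial]

private lemma card_S0 {n k : ℕ} (hk : k ≤ n) :
    (Finset.univ.filter fun i : Fin n => (i : ℕ) < k).card = k :=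
  Finset.card_eq_of_bijective (fun m hm => ⟨m, lt_of_lt_of_le hm hk⟩)
    (fun i hi => ⟨i, (Finset.mem_filter.1 hi).2, Fin.ext rfl⟩)
    (fun m hm => Finset.mem_filter.2 ⟨Finset.mem_univ _, hm⟩)
    (fun m m' _ _ h => by simpa [Fin.ext_iff] using h)

private lemma chiF_S0 {n k : ℕ} (i : Fin n) :
    chiF (Finset.univ.filter fun i : Fin n => (i : ℕ) < k) i =
      if (i : ℕ) < k then 0 else 1 := by
  simp [chiF]

private lemma chi_congr {n k : ℕ} {S : Finset (Fin n)} {b : Fin n}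
    (h : b ∈ S ↔ (b : ℕ) < k) :
    chiF S b = chiF (Finset.univ.filter fun i : Fin n => (i : ℕ) < k) b := by
  simp [chiF, h]

private lemma main_lt {n k : ℕ} (hk : k ≤ n) (S : Finset (Fin n)) (hS : S.card = k)
    (σ : Equiv.Perm (Fin n))
    (hne : ¬(S = (Finset.univ.filter fun i : Fin n => (i : ℕ) < k) ∧ σ = 1)) :
    monLT n (emon S σ) (emon (Finset.univ.filter fun i : Fin n => (i : ℕ) < k) 1) := by
  classical
  set S₀ : Finset (Fin n) := Finset.univ.filter fun i : Fin n => (i : ℕ) < k with hS₀def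
  set D : Finset (Fin n) :=
    Finset.univ.filter fun j => ¬(σ j = j ∧ ((j ∈ S) ↔ (j : ℕ) < k)) with hDdef
  have hD : D.Nonempty := by
    by_contra h
    rw [Finset.not_nonempty_iff_eq_empty] at h
    have hall : ∀ j : Fin n, σ j = j ∧ ((j ∈ S) ↔ (j : ℕ) < k) := by
      intro j
      by_contra hj
      have : j ∈ D := Finset.mem_filter.2 ⟨Finset.mem_univ _, hj⟩
      simp [h] at this
    refine hne ⟨?_, ?_⟩
    · ext j; simp [hS₀def, (hall j).2]
    · exact Equiv.ext fun j => by rw [(hall j).1, Equiv.Perm.one_apply]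
  set j₀ : Fin n := D.min' hD with hj₀def
  have hj₀mem : j₀ ∈ D := D.min'_mem hD
  have hj₀ : ¬(σ j₀ = j₀ ∧ ((j₀ ∈ S) ↔ (j₀ : ℕ) < k)) := (Finset.mem_filter.1 hj₀mem).2
  have hmin : ∀ i : Fin n, (i : ℕ) < (j₀ : ℕ) → σ i = i ∧ ((i ∈ S) ↔ (i : ℕ) < k) := by
    intro i hi
    by_contra h
    have : i ∈ D := Finset.mem_filter.2 ⟨Finset.mem_univ _, h⟩
    have hle := D.min'_le i this
    rw [Fin.le_def] at hle
    omega
  have hσj₀ : ∀ a : Fin n, (a : ℕ) < (j₀ : ℕ) → a ≠ σ j₀ := by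
    intro a ha h
    have h1 := (hmin a ha).1
    have h2 : a = j₀ := σ.injective (by rw [h1, ← h])
    rw [h2] at ha
    exact lt_irrefl _ ha
  have hkj : ¬ (j₀ : ℕ) < k → k ≤ (j₀ : ℕ) := fun h => Nat.le_of_not_lt h
  refine Or.inr ⟨?_, ⟨(j₀, j₀, chiF S₀ j₀), ?_, ?_⟩⟩
  · rw [emon, emon, sum_single_sum, sum_single_sum]
  · rintro ⟨a, b, c⟩ hw
    have hkey : (c : ℕ) * (n * n) + ((b : ℕ) * n + (a : ℕ)) <
        (chiF S₀ j₀ : ℕ) * (n * n) + ((j₀ : ℕ) * n + (j₀ : ℕ)) := by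
      have h := hw
      unfold varKey at h
      dsimp only at h
      omega
    have h1 := digit_lt (subkey_lt a b) (subkey_lt j₀ j₀) hkey
    rw [emon_apply, emon_apply, Equiv.Perm.one_apply]
    suffices hiff : (a = σ b ∧ c = chiF S b) ↔ (a = b ∧ c = chiF S₀ b) by
      simp only [hiff]
    by_cases hjk : (j₀ : ℕ) < k
    · -- Case A : v is an X variable
      have hcv : chiF S₀ j₀ = 0 := by rw [hS₀def, chiF_S0, if_pos hjk]
      rw [hcv] at h1
      simp only [Fin.val_zero] at h1
      rcases h1 with h1 | ⟨hc, h2⟩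
      · omega
      · rcases digit_lt a.2 j₀.2 h2 with hb | ⟨hb, haj⟩
        · obtain ⟨hσb, hmem⟩ := hmin b hb
          rw [hσb, hS₀def, ← chi_congr hmem]
        · have hbj : b = j₀ := Fin.ext hb
          subst hbj
          constructor
          · rintro ⟨h1, -⟩; exact absurd h1 (hσj₀ a haj)
          · rintro ⟨h1, -⟩
            rw [h1] at haj
            exact absurd haj (lt_irrefl _)
    · -- Case B : v is a Y variable
      have hkle : k ≤ (j₀ : ℕ) := hkj hjk
      have hsub : S₀ ⊆ S := by
        intro i hi
        rw [hS₀def, Finset.mem_filter] at hi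
        exact (hmin i (lt_of_lt_of_le hi.2 hkle)).2.mpr hi.2
      have hSeq : S = S₀ :=
        (Finset.eq_of_subset_of_card_le hsub (by rw [hS, hS₀def, card_S0 hk])).symm
      have hcv : chiF S₀ j₀ = 1 := by
        rw [hS₀def, chiF_S0, if_neg hjk]
      rw [hcv] at h1
      simp only [Fin.val_one] at h1
      rw [hSeq]
      rcases h1 with h1 | ⟨hc, h2⟩
      · -- c = 0, any X variable
        have hc0 : c = 0 := Fin.ext (by omega)
        subst hc0
        by_cases hbk : (b : ℕ) < k
        · have := hmin b (lt_of_lt_of_le hbk hkle)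
          rw [this.1]
        · have hb1 : chiF S₀ b = 1 := by rw [hS₀def, chiF_S0, if_neg hbk]
          rw [hb1]
          constructor
          · rintro ⟨-, h⟩; exact absurd h (by decide)
          · rintro ⟨-, h⟩; exact absurd h (by decide)
      · rcases digit_lt a.2 j₀.2 h2 with hb | ⟨hb, haj⟩
        · rw [(hmin b hb).1]
        · have hbj : b = j₀ := Fin.ext hb
          subst hbj
          constructor
          · rintro ⟨h1, -⟩; exact absurd h1 (hσj₀ a haj)
          · rintro ⟨h1, -⟩
            rw [h1] at haj
            exact absurd haj (lt_irrefl _)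
  · have hR : emon S₀ 1 (j₀, j₀, chiF S₀ j₀) = 1 := by
      rw [emon_apply, Equiv.Perm.one_apply, if_pos ⟨rfl, rfl⟩]
    have hL : emon S σ (j₀, j₀, chiF S₀ j₀) = 0 := by
      rw [emon_apply, if_neg]
      rintro ⟨h1, h2⟩
      refine hj₀ ⟨h1.symm, ?_⟩
      by_cases hm : j₀ ∈ S <;> by_cases hlt : (j₀ : ℕ) < k
      · exact iff_of_true hm hlt
      · exfalso
        rw [hS₀def, chiF_S0, if_neg hlt] at h2
        rw [chiF, if_pos hm] at h2
        exact (by decide : (1 : Fin 2) ≠ 0) h2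
      · exfalso
        rw [hS₀def, chiF_S0, if_pos hlt] at h2
        rw [chiF, if_neg hm] at h2
        exact (by decide : (0 : Fin 2) ≠ 1) h2
      · exact iff_of_false hm hlt
    rw [hL, hR]
    exact Nat.zero_lt_one

private lemma monLT_irrefl {n : ℕ} (a : (Fin n × Fin n × Fin 2) →₀ ℕ) : ¬ monLT n a a := by
  rintro (h | ⟨-, v, -, h⟩) <;> exact lt_irrefl _ h

private lemma mu_eq {n k : ℕ} :
    (∑ i : Fin n,
        Finsupp.single (i, i, if (i : ℕ) < k then (0 : Fin 2) else 1) 1) =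
      emon (Finset.univ.filter fun i : Fin n => (i : ℕ) < k) 1 := by
  rw [emon]
  refine Finset.sum_congr rfl fun i _ => ?_
  rw [Equiv.Perm.one_apply, chiF_S0]

theorem leadMon_f (K : Type*) [Field K] (n : ℕ) (hn : 1 ≤ n) (k : ℕ) (hk : k ≤ n) :
    IsLeadMon n
      (∑ S ∈ Finset.powersetCard k (Finset.univ : Finset (Fin n)),
        (Matrix.of fun i j =>
            if j ∈ S then
              (MvPolynomial.X (i, j, (0 : Fin 2)) :
                MvPolynomial (Fin n × Fin n × Fin 2) K)
            else MvPolynomial.X (i, j, (1 : Fin 2))).det)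
      (∑ i : Fin n,
        Finsupp.single (i, i, if (i : ℕ) < k then (0 : Fin 2) else 1) 1) := by
  classical
  set S₀ : Finset (Fin n) := Finset.univ.filter fun i : Fin n => (i : ℕ) < k with hS₀def
  have hS₀mem : S₀ ∈ Finset.powersetCard k (Finset.univ : Finset (Fin n)) :=
    Finset.mem_powersetCard.2 ⟨Finset.subset_univ _, card_S0 hk⟩
  constructor
  · rw [mem_support_iff, mu_eq, coeff_F]
    have h1 : (∑ S ∈ Finset.powersetCard k (Finset.univ : Finset (Fin n)),
        ∑ σ : Equiv.Perm (Fin n),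
          ((Equiv.Perm.sign σ : ℤ) : K) * (if emon S σ = emon S₀ 1 then 1 else 0)) = 1 := by
      rw [Finset.sum_eq_single S₀]
      · rw [Finset.sum_eq_single (1 : Equiv.Perm (Fin n))]
        · simp
        · intro σ _ hσ
          rw [if_neg, mul_zero]
          intro he
          have hm := main_lt hk S₀ (card_S0 hk) σ (fun h => hσ h.2)
          rw [he] at hm
          exact monLT_irrefl _ hm
        · intro h; exact absurd (Finset.mem_univ _) h
      · intro S hSmem hSne
        refine Finset.sum_eq_zero fun σ _ => ?_
        rw [if_neg, mul_zero]
        intro he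
        have hm := main_lt hk S (Finset.mem_powersetCard.1 hSmem).2 σ (fun h => hSne h.1)
        rw [he] at hm
        exact monLT_irrefl _ hm
      · intro h; exact absurd hS₀mem h
    rw [h1]
    exact one_ne_zero
  · intro ν hν hne
    rw [mem_support_iff] at hν
    have hex : ∃ S ∈ Finset.powersetCard k (Finset.univ : Finset (Fin n)),
        ∃ σ : Equiv.Perm (Fin n), emon S σ = ν := by
      by_contra h
      push_neg at h
      apply hν
      rw [coeff_F]
      exact Finset.sum_eq_zero fun S hS => Finset.sum_eq_zero fun σ _ => by
        rw [if_neg (h S hS σ), mul_zero]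
    obtain ⟨S, hSm, σ, hEq⟩ := hex
    have hnepair : ¬(S = S₀ ∧ σ = 1) := by
      rintro ⟨rfl, rfl⟩
      exact hne (by rw [← hEq, mu_eq])
    have hm := main_lt hk S (Finset.mem_powersetCard.1 hSm).2 σ hnepair
    rw [hEq] at hm
    rw [mu_eq]
    exact hm
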